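/- arXiv:1204.3213 — 5 statements merged into one kernel-verified Lean document; each statement's English description precedes it below -/
import Mathlib

section
/- Let μ and ν be probability measures on a real Hilbert space H, let π be a probability measure on H × H whose first marginal is μ and whose second marginal is ν, and let α ∈ H be such that ∫ ‖y − α‖^{−2} dμ(y) < ∞ and ∫ ‖y − α‖^{−2} dν(y) < ∞. Then ‖∫ D(α,y) dμ(y) − ∫ D(α,y') dν(y')‖ ≤ ( √(∫ ‖y − α‖^{−2} dμ(y)) + √(∫ ‖y' − α‖^{−2} dν(y')) ) · √(∫ ‖y − y'‖² dπ(y,y')). -/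
open MeasureTheory
open scoped Classical ENNReal

/-- The unit vector "starting" from `a` in the direction of `b`. -/
noncomputable def unitDir {H : Type*} [NormedAddCommGroup H] [InnerProductSpace ℝ H]
    (a b : H) : H :=
  if b = a then 0 else ‖b - a‖⁻¹ • (b - a)

section aux

variable {H : Type*} [NormedAddCommGroup H] [InnerProductSpace ℝ H]

lemma norm_unitDir_le_one (a b : H) : ‖unitDir a b‖ ≤ 1 := by
  unfold unitDir
  split_ifs with h
  · simp
  · have hb : b - a ≠ 0 := sub_ne_zero.mpr h
    rw [norm_smul, norm_inv, norm_norm, inv_mul_cancel₀ (norm_ne_zero_iff.mpr hb)]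

lemma unitDir_measurable [MeasurableSpace H] [BorelSpace H] [SecondCountableTopology H] (a : H) :
    Measurable (unitDir a) := by
  unfold unitDir
  have hs : MeasurableSet {b : H | b = a} := by
    simpa using (measurableSet_singleton a)
  exact Measurable.ite hs measurable_const
    ((measurable_norm.comp (measurable_id.sub measurable_const)).inv.smul
      (measurable_id.sub measurable_const))

/-- key real pointwise bound -/
lemma norm_unitDir_sub_unitDir_le (a y y' : H) (hy : y ≠ a) (hy' : y' ≠ a) :
    ‖unitDir a y - unitDir a y'‖ ≤ (‖y - a‖⁻¹ + ‖y' - a‖⁻¹) * ‖y - y'‖ := by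
  set u := y - a with hu
  set v := y' - a with hv
  have hu0 : u ≠ 0 := sub_ne_zero.mpr hy
  have hv0 : v ≠ 0 := sub_ne_zero.mpr hy'
  have hun : (0:ℝ) < ‖u‖ := norm_pos_iff.mpr hu0
  have hvn : (0:ℝ) < ‖v‖ := norm_pos_iff.mpr hv0
  have huv : y - y' = u - v := by simp [hu, hv]
  rw [show unitDir a y = ‖u‖⁻¹ • u by simp [unitDir, hy, hu],
    show unitDir a y' = ‖v‖⁻¹ • v by simp [unitDir, hy', hv], huv]
  -- bound by 2 * ‖u - v‖ / max
  have key : ∀ w z : H, w ≠ 0 → z ≠ 0 →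
      ‖‖w‖⁻¹ • w - ‖z‖⁻¹ • z‖ ≤ 2 * ‖w‖⁻¹ * ‖w - z‖ := by
    intro w z hw hz
    have hwn : (0:ℝ) < ‖w‖ := norm_pos_iff.mpr hw
    have hzn : (0:ℝ) < ‖z‖ := norm_pos_iff.mpr hz
    have hdec : ‖w‖⁻¹ • w - ‖z‖⁻¹ • z = ‖w‖⁻¹ • (w - z) + (‖w‖⁻¹ - ‖z‖⁻¹) • z := by
      rw [smul_sub, sub_smul]
      abel
    rw [hdec]
    have h1 : ‖‖w‖⁻¹ • (w - z)‖ = ‖w‖⁻¹ * ‖w - z‖ := by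
      rw [norm_smul, Real.norm_eq_abs, abs_of_pos (inv_pos.mpr hwn)]
    have h2 : ‖(‖w‖⁻¹ - ‖z‖⁻¹) • z‖ ≤ ‖w‖⁻¹ * ‖w - z‖ := by
      rw [norm_smul, Real.norm_eq_abs]
      have : |‖w‖⁻¹ - ‖z‖⁻¹| = |‖z‖ - ‖w‖| / (‖w‖ * ‖z‖) := by
        have hrw : ‖w‖⁻¹ - ‖z‖⁻¹ = (‖z‖ - ‖w‖) / (‖w‖ * ‖z‖) := by
          field_simp
        rw [hrw, abs_div, abs_of_pos (mul_pos hwn hzn)]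
      rw [this]
      have habs : |‖z‖ - ‖w‖| ≤ ‖w - z‖ := by
        rw [abs_sub_comm]
        exact abs_norm_sub_norm_le w z
      calc |‖z‖ - ‖w‖| / (‖w‖ * ‖z‖) * ‖z‖ = |‖z‖ - ‖w‖| * ‖w‖⁻¹ := by
            field_simp
        _ ≤ ‖w - z‖ * ‖w‖⁻¹ := by
            exact mul_le_mul_of_nonneg_right habs (inv_pos.mpr hwn).le
        _ = ‖w‖⁻¹ * ‖w - z‖ := by ring
    calc ‖‖w‖⁻¹ • (w - z) + (‖w‖⁻¹ - ‖z‖⁻¹) • z‖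
        ≤ ‖‖w‖⁻¹ • (w - z)‖ + ‖(‖w‖⁻¹ - ‖z‖⁻¹) • z‖ := norm_add_le _ _
      _ ≤ ‖w‖⁻¹ * ‖w - z‖ + ‖w‖⁻¹ * ‖w - z‖ := by rw [h1]; linarith
      _ = 2 * ‖w‖⁻¹ * ‖w - z‖ := by ring
  rcases le_total ‖u‖ ‖v‖ with hle | hle
  · -- use bound with v: ≤ 2‖v‖⁻¹‖u−v‖ ≤ (‖u‖⁻¹+‖v‖⁻¹)‖u−v‖
    have h := key v u hv0 hu0
    rw [norm_sub_rev, show v - u = -(u - v) by abel, norm_neg] at h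
    refine h.trans ?_
    have : 2 * ‖v‖⁻¹ ≤ ‖u‖⁻¹ + ‖v‖⁻¹ := by
      have := inv_anti₀ hun hle
      linarith
    exact mul_le_mul_of_nonneg_right this (norm_nonneg _)
  · have h := key u v hu0 hv0
    refine h.trans ?_
    have : 2 * ‖u‖⁻¹ ≤ ‖u‖⁻¹ + ‖v‖⁻¹ := by
      have := inv_anti₀ hvn hle
      linarith
    exact mul_le_mul_of_nonneg_right this (norm_nonneg _)

/-- key ENNReal pointwise bound -/
lemma ofReal_norm_unitDir_sub_le (a y y' : H) :
    ENNReal.ofReal ‖unitDir a y - unitDir a y'‖ ≤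
      ((ENNReal.ofReal ‖y - a‖)⁻¹ + (ENNReal.ofReal ‖y' - a‖)⁻¹)
        * ENNReal.ofReal ‖y - y'‖ := by
  by_cases hyy : y = y'
  · simp [hyy]
  by_cases hy : y = a
  · have h1 : (ENNReal.ofReal ‖y - a‖)⁻¹ = ∞ := by simp [hy]
    have h2 : (0:ℝ≥0∞) < ENNReal.ofReal ‖y - y'‖ := by
      rw [ENNReal.ofReal_pos]
      exact norm_pos_iff.mpr (sub_ne_zero.mpr hyy)
    rw [h1]
    have : (⊤ + (ENNReal.ofReal ‖y' - a‖)⁻¹) * ENNReal.ofReal ‖y - y'‖ = ⊤ := by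
      rw [top_add, ENNReal.top_mul h2.ne']
    rw [this]
    exact le_top
  by_cases hy' : y' = a
  · have h1 : (ENNReal.ofReal ‖y' - a‖)⁻¹ = ∞ := by simp [hy']
    have h2 : (0:ℝ≥0∞) < ENNReal.ofReal ‖y - y'‖ := by
      rw [ENNReal.ofReal_pos]
      exact norm_pos_iff.mpr (sub_ne_zero.mpr hyy)
    rw [h1]
    have : ((ENNReal.ofReal ‖y - a‖)⁻¹ + ⊤) * ENNReal.ofReal ‖y - y'‖ = ⊤ := by
      rw [add_top, ENNReal.top_mul h2.ne']
    rw [this]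
    exact le_top
  · have h := norm_unitDir_sub_unitDir_le a y y' hy hy'
    have hun : (0:ℝ) < ‖y - a‖ := norm_pos_iff.mpr (sub_ne_zero.mpr hy)
    have hvn : (0:ℝ) < ‖y' - a‖ := norm_pos_iff.mpr (sub_ne_zero.mpr hy')
    calc ENNReal.ofReal ‖unitDir a y - unitDir a y'‖
        ≤ ENNReal.ofReal ((‖y - a‖⁻¹ + ‖y' - a‖⁻¹) * ‖y - y'‖) :=
          ENNReal.ofReal_le_ofReal h
      _ = (ENNReal.ofReal ‖y - a‖⁻¹ + ENNReal.ofReal ‖y' - a‖⁻¹)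
            * ENNReal.ofReal ‖y - y'‖ := by
          rw [ENNReal.ofReal_mul (by positivity), ENNReal.ofReal_add (by positivity) (by positivity)]
      _ = _ := by
          rw [ENNReal.ofReal_inv_of_pos hun, ENNReal.ofReal_inv_of_pos hvn]

end aux

/-- If `π` is a coupling of two probability measures `μ, ν` on a real Hilbert space and
`α ∈ H` has finite inverse second moments `∫ ‖y − α‖⁻² dμ` and `∫ ‖y − α‖⁻² dν`, then
`‖∫ D(α,y) dμ(y) − ∫ D(α,y') dν(y')‖`
  `≤ (√(∫ ‖y − α‖⁻² dμ) + √(∫ ‖y' − α‖⁻² dν)) · √(∫ ‖y − y'‖² dπ)`. -/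
theorem norm_integral_unitDir_sub_le
    {H : Type*} [NormedAddCommGroup H] [InnerProductSpace ℝ H] [CompleteSpace H]
    [MeasurableSpace H] [BorelSpace H] [SecondCountableTopology H]
    (μ ν : Measure H) [IsProbabilityMeasure μ] [IsProbabilityMeasure ν]
    (π : Measure (H × H)) [IsProbabilityMeasure π]
    (hπ1 : π.map Prod.fst = μ) (hπ2 : π.map Prod.snd = ν)
    (α : H)
    (hμα : ∫⁻ y, ((ENNReal.ofReal ‖y - α‖) ^ 2)⁻¹ ∂μ ≠ ∞)
    (hνα : ∫⁻ y, ((ENNReal.ofReal ‖y - α‖) ^ 2)⁻¹ ∂ν ≠ ∞) :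
    ENNReal.ofReal ‖(∫ y, unitDir α y ∂μ) - ∫ y', unitDir α y' ∂ν‖ ≤
      ((∫⁻ y, ((ENNReal.ofReal ‖y - α‖) ^ 2)⁻¹ ∂μ) ^ (1/2 : ℝ)
          + (∫⁻ y', ((ENNReal.ofReal ‖y' - α‖) ^ 2)⁻¹ ∂ν) ^ (1/2 : ℝ))
        * (∫⁻ z, ENNReal.ofReal (‖z.1 - z.2‖ ^ 2) ∂π) ^ (1/2 : ℝ) := by
  have hm : Measurable (unitDir α) := unitDir_measurable α
  have hsm : StronglyMeasurable (unitDir α) := hm.stronglyMeasurable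
  -- integrability
  have hint : ∀ (m : Measure H) [IsProbabilityMeasure m], Integrable (unitDir α) m := by
    intro m _
    refine Integrable.mono' (integrable_const (1:ℝ)) hsm.aestronglyMeasurable ?_
    exact Filter.Eventually.of_forall fun y => norm_unitDir_le_one α y
  have hint1 : Integrable (fun z : H × H => unitDir α z.1) π := by
    refine Integrable.mono' (integrable_const (1:ℝ))
      ((hsm.comp_measurable measurable_fst).aestronglyMeasurable) ?_
    exact Filter.Eventually.of_forall fun z => norm_unitDir_le_one α z.1
  have hint2 : Integrable (fun z : H × H => unitDir α z.2) π := by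
    refine Integrable.mono' (integrable_const (1:ℝ))
      ((hsm.comp_measurable measurable_snd).aestronglyMeasurable) ?_
    exact Filter.Eventually.of_forall fun z => norm_unitDir_le_one α z.2
  -- rewrite integrals via the coupling
  have h1 : ∫ y, unitDir α y ∂μ = ∫ z : H × H, unitDir α z.1 ∂π := by
    rw [← hπ1, integral_map measurable_fst.aemeasurable]
    rw [hπ1]
    exact hsm.aestronglyMeasurable
  have h2 : ∫ y', unitDir α y' ∂ν = ∫ z : H × H, unitDir α z.2 ∂π := by
    rw [← hπ2, integral_map measurable_snd.aemeasurable]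
    rw [hπ2]
    exact hsm.aestronglyMeasurable
  have h3 : (∫ y, unitDir α y ∂μ) - ∫ y', unitDir α y' ∂ν
      = ∫ z : H × H, (unitDir α z.1 - unitDir α z.2) ∂π := by
    rw [h1, h2, integral_sub hint1 hint2]
  rw [h3]
  -- step 1: norm of integral ≤ lintegral of norm
  have step1 : ENNReal.ofReal ‖∫ z : H × H, (unitDir α z.1 - unitDir α z.2) ∂π‖
      ≤ ∫⁻ z : H × H, ENNReal.ofReal ‖unitDir α z.1 - unitDir α z.2‖ ∂π := by
    calc ENNReal.ofReal ‖∫ z : H × H, (unitDir α z.1 - unitDir α z.2) ∂π‖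
        ≤ ENNReal.ofReal (∫ z : H × H, ‖unitDir α z.1 - unitDir α z.2‖ ∂π) :=
          ENNReal.ofReal_le_ofReal (norm_integral_le_integral_norm _)
      _ = ∫⁻ z : H × H, ENNReal.ofReal ‖unitDir α z.1 - unitDir α z.2‖ ∂π := by
          exact ofReal_integral_eq_lintegral_ofReal (hint1.sub hint2).norm
            (Filter.Eventually.of_forall fun z => norm_nonneg _)
  refine step1.trans ?_
  -- notation
  set f : H × H → ℝ≥0∞ := fun z => (ENNReal.ofReal ‖z.1 - α‖)⁻¹ with hf
  set g : H × H → ℝ≥0∞ := fun z => (ENNReal.ofReal ‖z.2 - α‖)⁻¹ with hg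
  set k : H × H → ℝ≥0∞ := fun z => ENNReal.ofReal ‖z.1 - z.2‖ with hk
  have hfm : AEMeasurable f π :=
    (((measurable_norm.comp (measurable_fst.sub measurable_const)).ennreal_ofReal).inv).aemeasurable
  have hgm : AEMeasurable g π :=
    (((measurable_norm.comp (measurable_snd.sub measurable_const)).ennreal_ofReal).inv).aemeasurable
  have hkm : AEMeasurable k π :=
    ((measurable_norm.comp (measurable_fst.sub measurable_snd)).ennreal_ofReal).aemeasurable
  have step2 : ∫⁻ z : H × H, ENNReal.ofReal ‖unitDir α z.1 - unitDir α z.2‖ ∂π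
      ≤ ∫⁻ z : H × H, ((f + g) * k) z ∂π := by
    refine lintegral_mono fun z => ?_
    simpa [hf, hg, hk] using ofReal_norm_unitDir_sub_le α z.1 z.2
  refine step2.trans ?_
  have hconj : Real.HolderConjugate 2 2 := Real.HolderConjugate.two_two
  have holder := ENNReal.lintegral_mul_le_Lp_mul_Lq π hconj (hfm.add hgm) hkm
  refine holder.trans ?_
  have minkowski := ENNReal.lintegral_Lp_add_le hfm hgm (le_refl (1:ℝ) |>.trans one_le_two)
  -- identify the pieces
  have hrpow2 : ∀ x : ℝ≥0∞, x ^ (2:ℝ) = x ^ 2 := fun x => by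
    rw [show (2:ℝ) = ((2:ℕ):ℝ) by norm_num, ENNReal.rpow_natCast]
  have hfint : ∫⁻ z : H × H, f z ^ (2:ℝ) ∂π = ∫⁻ y, ((ENNReal.ofReal ‖y - α‖) ^ 2)⁻¹ ∂μ := by
    rw [← hπ1, lintegral_map ?_ measurable_fst]
    · simp only [hf, hrpow2, ENNReal.inv_pow]
    · exact ((measurable_norm.comp (measurable_id.sub measurable_const)).ennreal_ofReal.pow_const 2).inv
  have hgint : ∫⁻ z : H × H, g z ^ (2:ℝ) ∂π = ∫⁻ y, ((ENNReal.ofReal ‖y - α‖) ^ 2)⁻¹ ∂ν := by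
    rw [← hπ2, lintegral_map ?_ measurable_snd]
    · simp only [hg, hrpow2, ENNReal.inv_pow]
    · exact ((measurable_norm.comp (measurable_id.sub measurable_const)).ennreal_ofReal.pow_const 2).inv
  have hkint : ∫⁻ z : H × H, k z ^ (2:ℝ) ∂π = ∫⁻ z, ENNReal.ofReal (‖z.1 - z.2‖ ^ 2) ∂π := by
    refine lintegral_congr fun z => ?_
    rw [hrpow2, hk, ← ENNReal.ofReal_pow (norm_nonneg _)]
  rw [hkint] at *
  calc (∫⁻ z : H × H, (f + g) z ^ (2:ℝ) ∂π) ^ (1/2:ℝ)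
          * (∫⁻ z, ENNReal.ofReal (‖z.1 - z.2‖ ^ 2) ∂π) ^ (1/2:ℝ)
      ≤ ((∫⁻ z : H × H, f z ^ (2:ℝ) ∂π) ^ (1/2:ℝ) + (∫⁻ z : H × H, g z ^ (2:ℝ) ∂π) ^ (1/2:ℝ))
          * (∫⁻ z, ENNReal.ofReal (‖z.1 - z.2‖ ^ 2) ∂π) ^ (1/2:ℝ) := by
        exact mul_le_mul_left minkowski _
    _ = _ := by rw [hfint, hgint]
end

section
/- Suppose: (i) p : ℝ → [0,∞) is bounded by p_max and satisfies |p(x₁) − p(x₂)| ≤ C₂|x₁ − x₂|^β for all x₁, x₂ ∈ ℝ; (ii) for all x₁, x₂ ∈ ℝ there exists a probability measure π on H × H whose marginals are μ_{x₁} and μ_{x₂} and such that ∫ ‖y − y'‖² dπ(y,y') ≤ C₄² |x₁ − x₂|^{2β}; (iii) ∫ ‖y − α‖^{−2} dμ_{x'}(y) ≤ C₆ for every α ∈ H and every x' ∈ ℝ. Then Φ is uniformly Hölder in its first variable: for all x₁, x₂ ∈ ℝ and all α ∈ H, ‖Φ(x₁,α) − Φ(x₂,α)‖ ≤ (C₂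 + 2 p_max C₄ √C₆) |x₁ − x₂|^β. -/
open MeasureTheory
open scoped Classical ENNReal

/-- The gradient `Φ(x,α) = −p(x) ∫ D(α,y) dμ_x(y)` of the weighted `L¹` criterion. -/
noncomputable def Phi {H : Type*} [NormedAddCommGroup H] [InnerProductSpace ℝ H]
    [MeasurableSpace H] (p : ℝ → ℝ) (μ : ℝ → MeasureTheory.Measure H) (x : ℝ) (α : H) : H :=
  -(p x) • ∫ y, unitDir α y ∂(μ x)

section Aux

variable {H : Type*} [NormedAddCommGroup H] [InnerProductSpace ℝ H]

lemma norm_unitDir_le_one_s3 (α y : H) : ‖unitDir α y‖ ≤ 1 := by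
  unfold unitDir
  split_ifs with h
  · simp
  · have hy : y - α ≠ 0 := sub_ne_zero.mpr h
    rw [norm_smul, norm_inv, norm_norm, inv_mul_cancel₀ (norm_ne_zero_iff.mpr hy)]

lemma aux_two_unit (u v : H) (hv : v ≠ 0) (hle : ‖v‖ ≤ ‖u‖) :
    ‖‖u‖⁻¹ • u - ‖v‖⁻¹ • v‖ ≤ ‖u - v‖ * (‖u‖⁻¹ + ‖v‖⁻¹) := by
  have hv' : (0:ℝ) < ‖v‖ := norm_pos_iff.mpr hv
  have hu' : (0:ℝ) < ‖u‖ := lt_of_lt_of_le hv' hle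
  have hinv : ‖u‖⁻¹ ≤ ‖v‖⁻¹ := inv_anti₀ hv' hle
  have key : ‖u‖⁻¹ • u - ‖v‖⁻¹ • v = ‖u‖⁻¹ • (u - v) + (‖u‖⁻¹ - ‖v‖⁻¹) • v := by
    rw [smul_sub, sub_smul]; abel
  rw [key]
  have h1 : ‖‖u‖⁻¹ • (u - v) + (‖u‖⁻¹ - ‖v‖⁻¹) • v‖ ≤
      ‖u‖⁻¹ * ‖u - v‖ + (‖v‖⁻¹ - ‖u‖⁻¹) * ‖v‖ := by
    refine (norm_add_le _ _).trans ?_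
    rw [norm_smul, norm_smul, Real.norm_eq_abs, Real.norm_eq_abs,
      abs_of_pos (inv_pos.mpr hu'), abs_of_nonpos (by linarith)]
    ring_nf
    exact le_refl _
  refine h1.trans ?_
  have h2 : ‖u‖ - ‖v‖ ≤ ‖u - v‖ := by
    linarith [abs_le.mp (abs_norm_sub_norm_le u v)]
  have h3 : (‖v‖⁻¹ - ‖u‖⁻¹) * ‖v‖ ≤ ‖u - v‖ * ‖v‖⁻¹ := by
    have e : (‖v‖⁻¹ - ‖u‖⁻¹) * ‖v‖ = (‖u‖ - ‖v‖) / ‖u‖ := by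
      field_simp
    rw [e]
    have s1 : (‖u‖ - ‖v‖) / ‖u‖ ≤ ‖u - v‖ / ‖u‖ := by gcongr
    have s2 : ‖u - v‖ / ‖u‖ ≤ ‖u - v‖ * ‖v‖⁻¹ := by
      rw [div_eq_mul_inv]
      exact mul_le_mul_of_nonneg_left hinv (norm_nonneg _)
    linarith
  nlinarith [norm_nonneg (u - v)]

lemma unitDir_self (α : H) : unitDir α α = 0 := by simp [unitDir]

lemma unitDir_of_ne {α y : H} (h : y ≠ α) : unitDir α y = ‖y - α‖⁻¹ • (y - α) := by
  simp [unitDir, h]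

lemma norm_unitDir_sub_le (α a b : H) :
    ‖unitDir α a - unitDir α b‖ ≤ ‖a - b‖ * (‖a - α‖⁻¹ + ‖b - α‖⁻¹) := by
  by_cases ha : a = α <;> by_cases hb : b = α
  · simp [ha, hb, unitDir_self]
  · have hb' : b - α ≠ 0 := sub_ne_zero.mpr hb
    rw [ha, unitDir_self, unitDir_of_ne hb]
    rw [zero_sub, norm_neg, norm_smul, norm_inv, norm_norm,
      inv_mul_cancel₀ (norm_ne_zero_iff.mpr hb')]
    have e : ‖α - b‖ = ‖b - α‖ := norm_sub_rev _ _
    rw [e, sub_self, norm_zero]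
    rw [inv_zero, zero_add, mul_inv_cancel₀ (norm_ne_zero_iff.mpr hb')]
  · have ha' : a - α ≠ 0 := sub_ne_zero.mpr ha
    rw [hb, unitDir_self, unitDir_of_ne ha]
    rw [sub_zero, norm_smul, norm_inv, norm_norm,
      inv_mul_cancel₀ (norm_ne_zero_iff.mpr ha')]
    rw [sub_self, norm_zero, inv_zero, add_zero,
      mul_inv_cancel₀ (norm_ne_zero_iff.mpr ha')]
  · rw [unitDir_of_ne ha, unitDir_of_ne hb]
    have hd : a - b = (a - α) - (b - α) := by abel
    rcases le_total ‖b - α‖ ‖a - α‖ with h | h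
    · rw [hd]; exact aux_two_unit _ _ (sub_ne_zero.mpr hb) h
    · have := aux_two_unit (b - α) (a - α) (sub_ne_zero.mpr ha) h
      rw [norm_sub_rev, hd, norm_sub_rev ((a-α)) ((b-α))]
      rw [add_comm (‖a - α‖⁻¹)]
      exact this

lemma measurable_unitDir [MeasurableSpace H] [BorelSpace H] [SecondCountableTopology H] (α : H) :
    Measurable (unitDir α) := by
  unfold unitDir
  refine Measurable.ite (measurableSet_eq) measurable_const ?_
  exact ((measurable_id.sub measurable_const).norm.inv).smul
    (measurable_id.sub measurable_const)

end Aux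

lemma ofReal_mul_inv_le {x r : ℝ} (hx : 0 ≤ x) (hr : 0 ≤ r) :
    ENNReal.ofReal (x * r⁻¹) ≤ ENNReal.ofReal x * (ENNReal.ofReal r)⁻¹ := by
  rcases eq_or_lt_of_le hr with h | h
  · simp [← h]
  · rw [ENNReal.ofReal_mul hx, ENNReal.ofReal_inv_of_pos h]


/-- If the density `p` is bounded and `β`-Hölder, the conditional laws `μ_x` are
`β`-Hölder in the Wasserstein sense (witnessed by couplings), and the inverse second
moments are uniformly bounded by `C₆`, then `Φ` is uniformly Hölder in its first
variable with constant `C₂ + 2 p_max C₄ √C₆`. -/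
theorem phi_uniform_holder
    {H : Type*} [NormedAddCommGroup H] [InnerProductSpace ℝ H] [CompleteSpace H]
    [MeasurableSpace H] [BorelSpace H] [SecondCountableTopology H]
    (μ : ℝ → Measure H) [∀ x', IsProbabilityMeasure (μ x')]
    (p : ℝ → ℝ) (hp_meas : Measurable p) (hp_nonneg : ∀ x', 0 ≤ p x')
    (C₂ C₄ C₆ pmax β : ℝ)
    (hC₂ : 0 < C₂) (hC₄ : 0 < C₄) (hC₆ : 0 < C₆) (hpmax : 0 < pmax) (hβ : 0 < β)
    -- (i) p is bounded by pmax and β-Hölder with constant C₂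
    (hp_bdd : ∀ x', p x' ≤ pmax)
    (hp_holder : ∀ x₁ x₂ : ℝ, |p x₁ - p x₂| ≤ C₂ * |x₁ - x₂| ^ β)
    -- (ii) couplings with second moment cost at most C₄² |x₁ − x₂|^{2β}
    (hcoupling : ∀ x₁ x₂ : ℝ, ∃ π : Measure (H × H), IsProbabilityMeasure π ∧
      π.map Prod.fst = μ x₁ ∧ π.map Prod.snd = μ x₂ ∧
      ∫⁻ z, ENNReal.ofReal (‖z.1 - z.2‖ ^ 2) ∂π ≤
        ENNReal.ofReal (C₄ ^ 2 * |x₁ - x₂| ^ (2 * β)))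
    -- (iii) uniformly bounded inverse second moments
    (hmom : ∀ (α : H) (x' : ℝ),
      ∫⁻ y, ((ENNReal.ofReal ‖y - α‖) ^ 2)⁻¹ ∂(μ x') ≤ ENNReal.ofReal C₆) :
    ∀ (x₁ x₂ : ℝ) (α : H),
      ‖Phi p μ x₁ α - Phi p μ x₂ α‖ ≤
        (C₂ + 2 * pmax * C₄ * Real.sqrt C₆) * |x₁ - x₂| ^ β := by
  intro x₁ x₂ α
  set d := |x₁ - x₂| ^ β with hd
  have hd0 : 0 ≤ d := Real.rpow_nonneg (abs_nonneg _) β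
  have hfm : Measurable (unitDir α) := measurable_unitDir α
  set I₁ := ∫ y, unitDir α y ∂(μ x₁) with hI₁
  set I₂ := ∫ y, unitDir α y ∂(μ x₂) with hI₂
  have hIbound : ‖I₁‖ ≤ 1 := by
    have := norm_integral_le_of_norm_le_const (μ := μ x₁) (C := 1)
      (Filter.Eventually.of_forall fun y => norm_unitDir_le_one_s3 α y)
    simpa using this
  obtain ⟨π, hπ, hfst, hsnd, hcost⟩ := hcoupling x₁ x₂
  haveI := hπ
  have hm1 : Measurable fun z : H × H => unitDir α z.1 := hfm.comp measurable_fst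
  have hm2 : Measurable fun z : H × H => unitDir α z.2 := hfm.comp measurable_snd
  have hint1 : Integrable (fun z : H × H => unitDir α z.1) π :=
    Integrable.mono' (integrable_const 1) hm1.aestronglyMeasurable
      (Filter.Eventually.of_forall fun z => norm_unitDir_le_one_s3 α z.1)
  have hint2 : Integrable (fun z : H × H => unitDir α z.2) π :=
    Integrable.mono' (integrable_const 1) hm2.aestronglyMeasurable
      (Filter.Eventually.of_forall fun z => norm_unitDir_le_one_s3 α z.2)
  have hI1π : I₁ = ∫ z : H × H, unitDir α z.1 ∂π := by
    rw [hI₁, ← hfst, integral_map measurable_fst.aemeasurable hfm.aestronglyMeasurable]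
  have hI2π : I₂ = ∫ z : H × H, unitDir α z.2 ∂π := by
    rw [hI₂, ← hsnd, integral_map measurable_snd.aemeasurable hfm.aestronglyMeasurable]
  have hdiff : I₁ - I₂ = ∫ z : H × H, (unitDir α z.1 - unitDir α z.2) ∂π := by
    rw [hI1π, hI2π, integral_sub hint1 hint2]
  set G : H × H → ℝ := fun z => ‖unitDir α z.1 - unitDir α z.2‖ with hG
  have hGm : Measurable G := (hm1.sub hm2).norm
  have hnormdiff : ‖I₁ - I₂‖ ≤ ∫ z, G z ∂π := by
    rw [hdiff]; exact norm_integral_le_integral_norm _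
  have hGeq : ∫ z, G z ∂π = (∫⁻ z, ENNReal.ofReal (G z) ∂π).toReal :=
    integral_eq_lintegral_of_nonneg_ae (Filter.Eventually.of_forall fun z => norm_nonneg _)
      hGm.aestronglyMeasurable
  set A : H × H → ℝ≥0∞ := fun z => ENNReal.ofReal ‖z.1 - z.2‖ with hA
  set B₁ : H × H → ℝ≥0∞ := fun z => (ENNReal.ofReal ‖z.1 - α‖)⁻¹ with hB₁
  set B₂ : H × H → ℝ≥0∞ := fun z => (ENNReal.ofReal ‖z.2 - α‖)⁻¹ with hB₂
  have hAm : Measurable A := (measurable_fst.sub measurable_snd).norm.ennreal_ofReal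
  have hB₁m : Measurable B₁ := ((measurable_fst.sub measurable_const).norm.ennreal_ofReal).inv
  have hB₂m : Measurable B₂ := ((measurable_snd.sub measurable_const).norm.ennreal_ofReal).inv
  have hptwise : ∀ z : H × H, ENNReal.ofReal (G z) ≤ A z * B₁ z + A z * B₂ z := by
    intro z
    have h0 : G z ≤ ‖z.1 - z.2‖ * ‖z.1 - α‖⁻¹ + ‖z.1 - z.2‖ * ‖z.2 - α‖⁻¹ := by
      have h := norm_unitDir_sub_le α z.1 z.2
      nlinarith [h]
    calc ENNReal.ofReal (G z)
        ≤ ENNReal.ofReal (‖z.1 - z.2‖ * ‖z.1 - α‖⁻¹ + ‖z.1 - z.2‖ * ‖z.2 - α‖⁻¹) :=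
          ENNReal.ofReal_le_ofReal h0
      _ ≤ ENNReal.ofReal (‖z.1 - z.2‖ * ‖z.1 - α‖⁻¹) +
          ENNReal.ofReal (‖z.1 - z.2‖ * ‖z.2 - α‖⁻¹) := ENNReal.ofReal_add_le
      _ ≤ A z * B₁ z + A z * B₂ z :=
          add_le_add (ofReal_mul_inv_le (norm_nonneg _) (norm_nonneg _))
            (ofReal_mul_inv_le (norm_nonneg _) (norm_nonneg _))
  -- second moments
  have hA2 : ∫⁻ z, A z ^ (2:ℝ) ∂π ≤ ENNReal.ofReal (C₄ ^ 2 * |x₁ - x₂| ^ (2 * β)) := by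
    have e : ∀ z : H × H, A z ^ (2:ℝ) = ENNReal.ofReal (‖z.1 - z.2‖ ^ 2) := by
      intro z
      rw [hA, ENNReal.ofReal_rpow_of_nonneg (norm_nonneg _) (by norm_num),
        show ((2:ℝ)) = ((2:ℕ):ℝ) by norm_num, Real.rpow_natCast]
    rw [lintegral_congr e]
    exact hcost
  have hBmeas : Measurable fun y : H => ((ENNReal.ofReal ‖y - α‖) ^ 2)⁻¹ :=
    (((measurable_id.sub measurable_const).norm.ennreal_ofReal).pow_const 2).inv
  have hB1mom : ∫⁻ z, B₁ z ^ (2:ℝ) ∂π ≤ ENNReal.ofReal C₆ := by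
    have e : ∀ z : H × H, B₁ z ^ (2:ℝ) = ((ENNReal.ofReal ‖z.1 - α‖) ^ 2)⁻¹ := by
      intro z
      rw [hB₁, ENNReal.inv_rpow, show ((2:ℝ)) = ((2:ℕ):ℝ) by norm_num, ENNReal.rpow_natCast]
    calc ∫⁻ z, B₁ z ^ (2:ℝ) ∂π = ∫⁻ z : H × H, ((ENNReal.ofReal ‖z.1 - α‖) ^ 2)⁻¹ ∂π :=
          lintegral_congr e
      _ = ∫⁻ y, ((ENNReal.ofReal ‖y - α‖) ^ 2)⁻¹ ∂(μ x₁) := by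
          rw [← hfst, lintegral_map hBmeas measurable_fst]
      _ ≤ ENNReal.ofReal C₆ := hmom α x₁
  have hB2mom : ∫⁻ z, B₂ z ^ (2:ℝ) ∂π ≤ ENNReal.ofReal C₆ := by
    have e : ∀ z : H × H, B₂ z ^ (2:ℝ) = ((ENNReal.ofReal ‖z.2 - α‖) ^ 2)⁻¹ := by
      intro z
      rw [hB₂, ENNReal.inv_rpow, show ((2:ℝ)) = ((2:ℕ):ℝ) by norm_num, ENNReal.rpow_natCast]
    calc ∫⁻ z, B₂ z ^ (2:ℝ) ∂π = ∫⁻ z : H × H, ((ENNReal.ofReal ‖z.2 - α‖) ^ 2)⁻¹ ∂π :=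
          lintegral_congr e
      _ = ∫⁻ y, ((ENNReal.ofReal ‖y - α‖) ^ 2)⁻¹ ∂(μ x₂) := by
          rw [← hsnd, lintegral_map hBmeas measurable_snd]
      _ ≤ ENNReal.ofReal C₆ := hmom α x₂
  -- Cauchy–Schwarz
  have hconj : Real.HolderConjugate 2 2 := Real.holderConjugate_iff.mpr ⟨one_lt_two, by norm_num⟩
  set K := ENNReal.ofReal (C₄ * d * Real.sqrt C₆) with hK
  have r1 : (C₄ ^ 2 * |x₁ - x₂| ^ (2 * β)) ^ ((1:ℝ)/2) = C₄ * d := by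
    have e2 : C₄ ^ 2 * |x₁ - x₂| ^ (2 * β) = (C₄ * d) ^ 2 := by
      rw [mul_pow, hd, ← Real.rpow_natCast (|x₁ - x₂| ^ β) 2,
        ← Real.rpow_mul (abs_nonneg _)]
      norm_num [mul_comm]
    rw [e2, ← Real.sqrt_eq_rpow, Real.sqrt_sq (by positivity)]
  have r2 : C₆ ^ ((1:ℝ)/2) = Real.sqrt C₆ := (Real.sqrt_eq_rpow _).symm
  have hKbound : ∀ B : (H × H) → ℝ≥0∞, Measurable B →
      (∫⁻ z, B z ^ (2:ℝ) ∂π ≤ ENNReal.ofReal C₆) →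
      ∫⁻ z, A z * B z ∂π ≤ K := by
    intro B hBm hBmom
    have hcs := ENNReal.lintegral_mul_le_Lp_mul_Lq π hconj hAm.aemeasurable hBm.aemeasurable
    simp only [Pi.mul_apply] at hcs
    refine hcs.trans ?_
    calc (∫⁻ z, A z ^ (2:ℝ) ∂π) ^ (1/2:ℝ) * (∫⁻ z, B z ^ (2:ℝ) ∂π) ^ (1/2:ℝ)
        ≤ (ENNReal.ofReal (C₄ ^ 2 * |x₁ - x₂| ^ (2 * β))) ^ (1/2:ℝ) *
          (ENNReal.ofReal C₆) ^ (1/2:ℝ) :=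
          mul_le_mul' (ENNReal.rpow_le_rpow hA2 (by norm_num))
            (ENNReal.rpow_le_rpow hBmom (by norm_num))
      _ = K := by
          rw [ENNReal.ofReal_rpow_of_nonneg (by positivity) (by norm_num),
            ENNReal.ofReal_rpow_of_nonneg hC₆.le (by norm_num), r1, r2,
            ← ENNReal.ofReal_mul (by positivity)]
  have htot : ∫⁻ z, ENNReal.ofReal (G z) ∂π ≤ ENNReal.ofReal (2 * (C₄ * d * Real.sqrt C₆)) := by
    calc ∫⁻ z, ENNReal.ofReal (G z) ∂π
        ≤ ∫⁻ z, (A z * B₁ z + A z * B₂ z) ∂π := lintegral_mono hptwise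
      _ = ∫⁻ z, A z * B₁ z ∂π + ∫⁻ z, A z * B₂ z ∂π := lintegral_add_left (hAm.mul hB₁m) _
      _ ≤ K + K := add_le_add (hKbound B₁ hB₁m hB1mom) (hKbound B₂ hB₂m hB2mom)
      _ = ENNReal.ofReal (2 * (C₄ * d * Real.sqrt C₆)) := by
          rw [hK, ← ENNReal.ofReal_add (by positivity) (by positivity)]
          ring_nf
  have hGle : ∫ z, G z ∂π ≤ 2 * (C₄ * d * Real.sqrt C₆) := by
    rw [hGeq]
    exact ENNReal.toReal_le_of_le_ofReal (by positivity) htot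
  have key2 : ‖I₁ - I₂‖ ≤ 2 * (C₄ * d * Real.sqrt C₆) := hnormdiff.trans hGle
  -- assembly
  have hsplit : Phi p μ x₁ α - Phi p μ x₂ α = (p x₂ - p x₁) • I₁ + p x₂ • (I₂ - I₁) := by
    simp only [Phi, ← hI₁, ← hI₂]
    module
  rw [hsplit]
  have hstep : ‖(p x₂ - p x₁) • I₁ + p x₂ • (I₂ - I₁)‖ ≤
      |p x₂ - p x₁| * ‖I₁‖ + p x₂ * ‖I₂ - I₁‖ := by
    refine (norm_add_le _ _).trans ?_
    rw [norm_smul, norm_smul, Real.norm_eq_abs, Real.norm_eq_abs,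
      abs_of_nonneg (hp_nonneg x₂)]
  refine hstep.trans ?_
  have t1 : |p x₂ - p x₁| * ‖I₁‖ ≤ C₂ * d := by
    have h := hp_holder x₂ x₁
    rw [abs_sub_comm x₂ x₁] at h
    calc |p x₂ - p x₁| * ‖I₁‖ ≤ (C₂ * d) * 1 :=
          mul_le_mul h hIbound (norm_nonneg _) (by positivity)
      _ = C₂ * d := mul_one _
  have t2 : p x₂ * ‖I₂ - I₁‖ ≤ pmax * (2 * (C₄ * d * Real.sqrt C₆)) := by
    refine mul_le_mul (hp_bdd x₂) ?_ (norm_nonneg _) hpmax.le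
    rw [norm_sub_rev]; exact key2
  have hsq : 0 ≤ Real.sqrt C₆ := Real.sqrt_nonneg _
  have e : C₂ * d + pmax * (2 * (C₄ * d * Real.sqrt C₆)) =
      (C₂ + 2 * pmax * C₄ * Real.sqrt C₆) * d := by ring
  linarith
end

section
/- Let H be a real Hilbert space and let Γ be a continuous linear self-adjoint operator on H such that c_min ‖u‖² ≤ ⟨Γu, u⟩ ≤ c_max ‖u‖² for all u ∈ H, where 0 < c_min ≤ c_max. Let (γ_k)_{k≥1} be positive reals with γ_k c_max ≤ 1 for all k. Then for every n ≥ 1, the operator norm of the product β_n := (I − γ_n Γ)(I − γ_{n−1} Γ) ⋯ (I − γ_1 Γ) satisfies ‖β_n‖ ≤ ∏_{k=1}^n (1 − γ_k c_min) ≤ exp(−c_min ∑_{k=1}^n γ_k). -/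
open scoped RealInnerProductSpace

lemma norm_le_of_inner_self_le {H : Type*} [NormedAddCommGroup H] [InnerProductSpace ℝ H]
    (S : H →L[ℝ] H) (hS : ∀ u v : H, ⟪S u, v⟫ = ⟪u, S v⟫) (m : ℝ) (hm : 0 ≤ m)
    (h : ∀ u : H, |⟪S u, u⟫| ≤ m * ‖u‖ ^ 2) : ‖S‖ ≤ m := by
  have main : ∀ u : H, ‖u‖ = 1 → ‖S u‖ ≤ m := by
    intro u hu
    rcases eq_or_ne (S u) 0 with h0 | h0
    · simp [h0, hm]
    set v : H := ‖S u‖⁻¹ • S u with hv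
    have hvn : ‖v‖ = 1 := by
      rw [hv, norm_smul]
      simp [norm_ne_zero_iff.mpr h0]
    have h2 : ⟪S v, u⟫ = ⟪S u, v⟫ := by rw [hS v u, real_inner_comm]
    have key : 4 * ⟪S u, v⟫ = ⟪S (u + v), u + v⟫ - ⟪S (u - v), u - v⟫ := by
      simp only [map_add, map_sub, inner_add_add_self, inner_sub_sub_self,
        inner_add_left, inner_sub_left, inner_add_right, inner_sub_right]
      linarith [h2]
    have h4 : 4 * ⟪S u, v⟫ ≤ m * ‖u + v‖ ^ 2 + m * ‖u - v‖ ^ 2 := by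
      rw [key]
      linarith [(abs_le.mp (h (u + v))).2, (abs_le.mp (h (u - v))).1]
    have hpar : ‖u + v‖ ^ 2 + ‖u - v‖ ^ 2 = 2 * (‖u‖ ^ 2 + ‖v‖ ^ 2) := by
      have := parallelogram_law_with_norm ℝ u v
      linarith
    have hSuv : ⟪S u, v⟫ = ‖S u‖ := by
      rw [hv, real_inner_smul_right, real_inner_self_eq_norm_sq]
      rw [sq]
      field_simp
    rw [hSuv] at h4
    rw [hu, hvn] at hpar
    nlinarith [h4, hpar]
  apply S.opNorm_le_bound hm
  intro u
  rcases eq_or_ne u 0 with rfl | h0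
  · simp
  have hn : ‖u‖ ≠ 0 := norm_ne_zero_iff.mpr h0
  have := main (‖u‖⁻¹ • u) (by rw [norm_smul]; simp [hn])
  rw [map_smul, norm_smul] at this
  simp only [norm_inv, norm_norm] at this
  rw [inv_mul_le_iff₀ (by positivity)] at this
  linarith [this]

/-- If `Γ` is a continuous self-adjoint operator on a real Hilbert space with
`c_min ‖u‖² ≤ ⟨Γu, u⟩ ≤ c_max ‖u‖²` and the steps satisfy `γ_k c_max ≤ 1`, then the
products `β_n = (I − γ_n Γ) ⋯ (I − γ_1 Γ)` satisfy
`‖β_n‖ ≤ ∏_{k=1}^n (1 − γ_k c_min) ≤ exp(−c_min ∑_{k=1}^n γ_k)`. -/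
theorem opNorm_prod_one_sub_smul_le
    {H : Type*} [NormedAddCommGroup H] [InnerProductSpace ℝ H] [CompleteSpace H]
    (Γ : H →L[ℝ] H) (hΓ_sa : ∀ u v : H, ⟪Γ u, v⟫ = ⟪u, Γ v⟫)
    (cmin cmax : ℝ) (hcmin : 0 < cmin) (hcc : cmin ≤ cmax)
    (hΓ_below : ∀ u : H, cmin * ‖u‖ ^ 2 ≤ ⟪Γ u, u⟫)
    (hΓ_above : ∀ u : H, ⟪Γ u, u⟫ ≤ cmax * ‖u‖ ^ 2)
    (γ : ℕ → ℝ) (hγ_pos : ∀ k, 1 ≤ k → 0 < γ k) (hγ_le : ∀ k, 1 ≤ k → γ k * cmax ≤ 1)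
    (B : ℕ → H →L[ℝ] H) (hB0 : B 0 = 1)
    (hBrec : ∀ n, B (n + 1) = (1 - γ (n + 1) • Γ).comp (B n)) :
    ∀ n, 1 ≤ n →
      ‖B n‖ ≤ ∏ k ∈ Finset.Icc 1 n, (1 - γ k * cmin) ∧
      ∏ k ∈ Finset.Icc 1 n, (1 - γ k * cmin) ≤
        Real.exp (-(cmin * ∑ k ∈ Finset.Icc 1 n, γ k)) := by
  -- nonnegativity of factors
  have hfac : ∀ k, 1 ≤ k → 0 ≤ 1 - γ k * cmin := by
    intro k hk
    have h1 := hγ_le k hk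
    have h2 : γ k * cmin ≤ γ k * cmax :=
      mul_le_mul_of_nonneg_left hcc (hγ_pos k hk).le
    linarith
  -- step bound
  have hstep : ∀ k, 1 ≤ k → ‖(1 : H →L[ℝ] H) - γ k • Γ‖ ≤ 1 - γ k * cmin := by
    intro k hk
    apply norm_le_of_inner_self_le _ _ _ (hfac k hk)
    · intro u
      have happ : ((1 : H →L[ℝ] H) - γ k • Γ) u = u - γ k • Γ u := by
        simp [ContinuousLinearMap.sub_apply]
      rw [happ, inner_sub_left, real_inner_smul_left, real_inner_self_eq_norm_sq]
      have hlo := hΓ_below u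
      have hhi := hΓ_above u
      have hγk := hγ_pos k hk
      have h1 := hγ_le k hk
      have hsq : (0:ℝ) ≤ ‖u‖ ^ 2 := by positivity
      rw [abs_le]
      constructor
      · nlinarith [mul_le_mul_of_nonneg_left hhi hγk.le]
      · nlinarith [mul_le_mul_of_nonneg_left hlo hγk.le]
    · intro u v
      simp only [ContinuousLinearMap.sub_apply, ContinuousLinearMap.smul_apply,
        ContinuousLinearMap.one_apply, inner_sub_left, inner_sub_right,
        real_inner_smul_left, real_inner_smul_right, hΓ_sa u v]
  -- product nonneg
  have hprod_nonneg : ∀ n, 0 ≤ ∏ k ∈ Finset.Icc 1 n, (1 - γ k * cmin) := by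
    intro n
    exact Finset.prod_nonneg fun k hk => hfac k (Finset.mem_Icc.mp hk).1
  -- first part by induction
  have hfirst : ∀ n, 1 ≤ n → ‖B n‖ ≤ ∏ k ∈ Finset.Icc 1 n, (1 - γ k * cmin) := by
    intro n hn
    induction n with
    | zero => omega
    | succ m ih =>
      rcases Nat.eq_or_lt_of_le hn with h1 | h1
      · -- m + 1 = 1, i.e. m = 0
        have hm : m = 0 := by omega
        subst hm
        rw [hBrec 0, hB0]
        have hc : ((1 : H →L[ℝ] H) - γ (0 + 1) • Γ).comp (1 : H →L[ℝ] H)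
            = 1 - γ 1 • Γ := by ext u; simp
        rw [hc]
        simpa using hstep 1 le_rfl
      · have hm : 1 ≤ m := by omega
        rw [hBrec m, Finset.prod_Icc_succ_top (by omega : 1 ≤ m + 1)]
        calc ‖(1 - γ (m + 1) • Γ).comp (B m)‖
            ≤ ‖(1 : H →L[ℝ] H) - γ (m + 1) • Γ‖ * ‖B m‖ :=
              ContinuousLinearMap.opNorm_comp_le _ _
          _ ≤ (1 - γ (m + 1) * cmin) * ∏ k ∈ Finset.Icc 1 m, (1 - γ k * cmin) := by
              apply mul_le_mul (hstep (m + 1) (by omega)) (ih hm) (norm_nonneg _)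
                (hfac (m + 1) (by omega))
          _ = (∏ k ∈ Finset.Icc 1 m, (1 - γ k * cmin)) * (1 - γ (m + 1) * cmin) := by
              ring
  intro n hn
  refine ⟨hfirst n hn, ?_⟩
  calc ∏ k ∈ Finset.Icc 1 n, (1 - γ k * cmin)
      ≤ ∏ k ∈ Finset.Icc 1 n, Real.exp (-(γ k * cmin)) := by
        apply Finset.prod_le_prod
        · intro k hk; exact hfac k (Finset.mem_Icc.mp hk).1
        · intro k _
          linarith [Real.add_one_le_exp (-(γ k * cmin))]
    _ = Real.exp (∑ k ∈ Finset.Icc 1 n, -(γ k * cmin)) := (Real.exp_sum _ _).symm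
    _ = Real.exp (-(cmin * ∑ k ∈ Finset.Icc 1 n, γ k)) := by
        congr 1
        rw [Finset.mul_sum, ← Finset.sum_neg_distrib]
        exact Finset.sum_congr rfl fun k _ => by ring
end

section
/- Let 1/2 < γ ≤ 1, c > 0, and set γ_k := c k^{−γ} and s_n := ∑_{k=1}^n γ_k. Then for every x > 0 with c x < 1, there exists a constant κ₁ ∈ (0, 1] such that for all n ≥ 1, κ₁ exp(−s_n x) ≤ ∏_{k=1}^n (1 − γ_k x) ≤ exp(−s_n x). -/
/-- Key pointwise lower bound: for `0 ≤ t ≤ t₀ < 1`,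
`exp(-(t + t²/(1-t₀))) ≤ 1 - t`. -/
lemma exp_neg_le_one_sub_aux (t t₀ : ℝ) (ht : 0 ≤ t) (htt : t ≤ t₀) (ht₀ : t₀ < 1) :
    Real.exp (-(t + t ^ 2 / (1 - t₀))) ≤ 1 - t := by
  have h1t : 0 < 1 - t := by linarith
  have h1t₀ : 0 < 1 - t₀ := by linarith
  have key : t / (1 - t) ≤ t + t ^ 2 / (1 - t₀) := by
    have heq : t / (1 - t) = t + t ^ 2 / (1 - t) := by field_simp; ring
    rw [heq]
    have : t ^ 2 / (1 - t) ≤ t ^ 2 / (1 - t₀) := by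
      gcongr
    linarith
  have h2 : (1 - t)⁻¹ ≤ Real.exp (t / (1 - t)) := by
    have h3 := Real.add_one_le_exp (t / (1 - t))
    have h4 : t / (1 - t) + 1 = (1 - t)⁻¹ := by field_simp; ring
    linarith
  have h5 : Real.exp (-(t / (1 - t))) ≤ 1 - t := by
    rw [Real.exp_neg]
    calc (Real.exp (t / (1 - t)))⁻¹ ≤ ((1 - t)⁻¹)⁻¹ := by
          gcongr
      _ = 1 - t := inv_inv _
  calc Real.exp (-(t + t ^ 2 / (1 - t₀))) ≤ Real.exp (-(t / (1 - t))) := by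
        apply Real.exp_le_exp.mpr; linarith
    _ ≤ 1 - t := h5

/-- For step sizes `γ_k = c k^{−γ}` with `1/2 < γ ≤ 1`, `c > 0`, and any `x > 0` with
`c x < 1`, the products `∏_{k=1}^n (1 − γ_k x)` are comparable to `exp(−s_n x)`, where
`s_n = ∑_{k=1}^n γ_k`: there is `κ₁ ∈ (0,1]` with
`κ₁ exp(−s_n x) ≤ ∏_{k=1}^n (1 − γ_k x) ≤ exp(−s_n x)` for all `n ≥ 1`. -/
theorem prod_one_sub_step_mul_comparable_exp
    (γ c : ℝ) (hγ0 : 1 / 2 < γ) (hγ1 : γ ≤ 1) (hc : 0 < c)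
    (x : ℝ) (hx : 0 < x) (hcx : c * x < 1) :
    ∃ κ₁ : ℝ, 0 < κ₁ ∧ κ₁ ≤ 1 ∧ ∀ n : ℕ, 1 ≤ n →
      κ₁ * Real.exp (-((∑ k ∈ Finset.Icc 1 n, c * (k : ℝ) ^ (-γ)) * x)) ≤
          ∏ k ∈ Finset.Icc 1 n, (1 - c * (k : ℝ) ^ (-γ) * x) ∧
      ∏ k ∈ Finset.Icc 1 n, (1 - c * (k : ℝ) ^ (-γ) * x) ≤
          Real.exp (-((∑ k ∈ Finset.Icc 1 n, c * (k : ℝ) ^ (-γ)) * x)) := by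
  have h2γ : Summable (fun k : ℕ => (k : ℝ) ^ (-(2 * γ))) :=
    Real.summable_nat_rpow.mpr (by linarith)
  set T := ∑' k : ℕ, (k : ℝ) ^ (-(2 * γ)) with hT
  have hT0 : 0 ≤ T := tsum_nonneg fun k => Real.rpow_nonneg (Nat.cast_nonneg k) _
  have hcx1 : 0 < 1 - c * x := by linarith
  set C := c ^ 2 * x ^ 2 / (1 - c * x) * T with hC
  have hC0 : 0 ≤ C := by positivity
  refine ⟨Real.exp (-C), Real.exp_pos _, ?_, ?_⟩
  · calc Real.exp (-C) ≤ Real.exp 0 := Real.exp_le_exp.mpr (by linarith)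
      _ = 1 := Real.exp_zero
  intro n hn
  -- basic facts about the terms
  have hterm : ∀ k ∈ Finset.Icc 1 n,
      0 < c * (k : ℝ) ^ (-γ) * x ∧ c * (k : ℝ) ^ (-γ) * x ≤ c * x := by
    intro k hk
    have hk1 : 1 ≤ k := (Finset.mem_Icc.mp hk).1
    have hkpos : (0 : ℝ) < (k : ℝ) := by exact_mod_cast hk1
    have hrpos : 0 < (k : ℝ) ^ (-γ) := Real.rpow_pos_of_pos hkpos _
    have hle1 : (k : ℝ) ^ (-γ) ≤ 1 :=
      Real.rpow_le_one_of_one_le_of_nonpos (by exact_mod_cast hk1) (by linarith)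
    exact ⟨by positivity, by nlinarith [mul_nonneg (mul_pos hc hx).le (sub_nonneg.mpr hle1)]⟩
  -- upper bound
  have hupper : ∏ k ∈ Finset.Icc 1 n, (1 - c * (k : ℝ) ^ (-γ) * x) ≤
      Real.exp (-((∑ k ∈ Finset.Icc 1 n, c * (k : ℝ) ^ (-γ)) * x)) := by
    calc ∏ k ∈ Finset.Icc 1 n, (1 - c * (k : ℝ) ^ (-γ) * x)
        ≤ ∏ k ∈ Finset.Icc 1 n, Real.exp (-(c * (k : ℝ) ^ (-γ) * x)) := by
          apply Finset.prod_le_prod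
          · intro k hk
            have := (hterm k hk).2
            linarith
          · intro k hk
            have h := Real.add_one_le_exp (-(c * (k : ℝ) ^ (-γ) * x))
            linarith
      _ = Real.exp (∑ k ∈ Finset.Icc 1 n, -(c * (k : ℝ) ^ (-γ) * x)) :=
          (Real.exp_sum _ _).symm
      _ = Real.exp (-((∑ k ∈ Finset.Icc 1 n, c * (k : ℝ) ^ (-γ)) * x)) := by
          congr 1
          rw [Finset.sum_mul, ← Finset.sum_neg_distrib]
  -- sum of squares bound
  have hsumsq : ∑ k ∈ Finset.Icc 1 n, (c * (k : ℝ) ^ (-γ) * x) ^ 2 ≤ c ^ 2 * x ^ 2 * T := by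
    have heq : ∀ k ∈ Finset.Icc 1 n,
        (c * (k : ℝ) ^ (-γ) * x) ^ 2 = c ^ 2 * x ^ 2 * (k : ℝ) ^ (-(2 * γ)) := by
      intro k hk
      have hk0 : (0 : ℝ) ≤ (k : ℝ) := Nat.cast_nonneg k
      have h2 : ((k : ℝ) ^ (-γ)) ^ 2 = (k : ℝ) ^ (-(2 * γ)) := by
        rw [← Real.rpow_natCast ((k : ℝ) ^ (-γ)) 2, ← Real.rpow_mul hk0]
        norm_num
        ring_nf
      calc (c * (k : ℝ) ^ (-γ) * x) ^ 2 = c ^ 2 * x ^ 2 * ((k : ℝ) ^ (-γ)) ^ 2 := by ring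
        _ = c ^ 2 * x ^ 2 * (k : ℝ) ^ (-(2 * γ)) := by rw [h2]
    rw [Finset.sum_congr rfl heq, ← Finset.mul_sum]
    have hsle : ∑ k ∈ Finset.Icc 1 n, (k : ℝ) ^ (-(2 * γ)) ≤ T :=
      Summable.sum_le_tsum (Finset.Icc 1 n)
        (fun k _ => Real.rpow_nonneg (Nat.cast_nonneg k) _) h2γ
    have : 0 ≤ c ^ 2 * x ^ 2 := by positivity
    nlinarith
  -- lower bound
  have hlower : Real.exp (-C) *
      Real.exp (-((∑ k ∈ Finset.Icc 1 n, c * (k : ℝ) ^ (-γ)) * x)) ≤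
      ∏ k ∈ Finset.Icc 1 n, (1 - c * (k : ℝ) ^ (-γ) * x) := by
    have hsum_le : ∑ k ∈ Finset.Icc 1 n,
        (c * (k : ℝ) ^ (-γ) * x + (c * (k : ℝ) ^ (-γ) * x) ^ 2 / (1 - c * x)) ≤
        (∑ k ∈ Finset.Icc 1 n, c * (k : ℝ) ^ (-γ)) * x + C := by
      rw [Finset.sum_add_distrib, ← Finset.sum_div]
      have h1 : ∑ k ∈ Finset.Icc 1 n, c * (k : ℝ) ^ (-γ) * x =
          (∑ k ∈ Finset.Icc 1 n, c * (k : ℝ) ^ (-γ)) * x := (Finset.sum_mul _ _ _).symm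
      have h2 : (∑ k ∈ Finset.Icc 1 n, (c * (k : ℝ) ^ (-γ) * x) ^ 2) / (1 - c * x) ≤ C := by
        rw [hC]
        calc (∑ k ∈ Finset.Icc 1 n, (c * (k : ℝ) ^ (-γ) * x) ^ 2) / (1 - c * x)
            ≤ (c ^ 2 * x ^ 2 * T) / (1 - c * x) := by gcongr
          _ = c ^ 2 * x ^ 2 / (1 - c * x) * T := by ring
      linarith
    calc Real.exp (-C) * Real.exp (-((∑ k ∈ Finset.Icc 1 n, c * (k : ℝ) ^ (-γ)) * x))
        = Real.exp (-((∑ k ∈ Finset.Icc 1 n, c * (k : ℝ) ^ (-γ)) * x + C)) := by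
          rw [← Real.exp_add]; ring_nf
      _ ≤ Real.exp (∑ k ∈ Finset.Icc 1 n,
            -(c * (k : ℝ) ^ (-γ) * x + (c * (k : ℝ) ^ (-γ) * x) ^ 2 / (1 - c * x))) := by
          apply Real.exp_le_exp.mpr
          rw [Finset.sum_neg_distrib]
          linarith
      _ = ∏ k ∈ Finset.Icc 1 n,
            Real.exp (-(c * (k : ℝ) ^ (-γ) * x + (c * (k : ℝ) ^ (-γ) * x) ^ 2 / (1 - c * x))) :=
          Real.exp_sum _ _
      _ ≤ ∏ k ∈ Finset.Icc 1 n, (1 - c * (k : ℝ) ^ (-γ) * x) := by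
          apply Finset.prod_le_prod
          · intro k hk; positivity
          · intro k hk
            exact exp_neg_le_one_sub_aux _ (c * x) (hterm k hk).1.le (hterm k hk).2 hcx
  exact ⟨hlower, hupper⟩
end

section
/- Let H be a real Hilbert space. For w ∈ H let T_w denote the continuous linear operator on H defined by T_w(u) = ⟨w, u⟩ w. Then for any three points a, b, c ∈ H with b ≠ a and c ≠ a, the rank-one operators built from the unit vectors D(a,b) and D(a,c) satisfy the operator-norm bound ‖T_{D(a,b)} − T_{D(a,c)}‖ ≤ 2 (1/‖a − b‖ + 1/‖a − c‖) ‖b − c‖. -/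
open scoped Classical RealInnerProductSpace

/-- The rank-one operator `T_w : u ↦ ⟨w, u⟩ w`. -/
noncomputable def rankOne {H : Type*} [NormedAddCommGroup H] [InnerProductSpace ℝ H]
    (w : H) : H →L[ℝ] H :=
  (innerSL ℝ w).smulRight w

lemma rankOne_sub_le {H : Type*} [NormedAddCommGroup H] [InnerProductSpace ℝ H]
    (w v : H) (hw : ‖w‖ ≤ 1) (hv : ‖v‖ ≤ 1) :
    ‖rankOne w - rankOne v‖ ≤ 2 * ‖w - v‖ := by
  apply ContinuousLinearMap.opNorm_le_bound _ (by positivity)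
  intro u
  have h1 : (rankOne w - rankOne v) u = ⟪w, u⟫ • (w - v) + ⟪w - v, u⟫ • v := by
    simp [rankOne, inner_sub_left, sub_smul, smul_sub]
  rw [h1]
  calc ‖⟪w, u⟫ • (w - v) + ⟪w - v, u⟫ • v‖
      ≤ ‖⟪w, u⟫ • (w - v)‖ + ‖⟪w - v, u⟫ • v‖ := norm_add_le _ _
    _ = |⟪w, u⟫| * ‖w - v‖ + |⟪w - v, u⟫| * ‖v‖ := by
        rw [norm_smul, norm_smul, Real.norm_eq_abs, Real.norm_eq_abs]
    _ ≤ (‖w‖ * ‖u‖) * ‖w - v‖ + (‖w - v‖ * ‖u‖) * ‖v‖ := by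
        gcongr <;> exact abs_real_inner_le_norm _ _
    _ ≤ (1 * ‖u‖) * ‖w - v‖ + (‖w - v‖ * ‖u‖) * 1 := by gcongr
    _ = 2 * ‖w - v‖ * ‖u‖ := by ring

lemma normed_sub_le {H : Type*} [NormedAddCommGroup H] [InnerProductSpace ℝ H]
    (x y : H) (hx : x ≠ 0) (hy : y ≠ 0) (hxy : ‖x‖ ≤ ‖y‖) :
    ‖‖x‖⁻¹ • x - ‖y‖⁻¹ • y‖ ≤ (‖x‖⁻¹ + ‖y‖⁻¹) * ‖x - y‖ := by
  have hx0 : (0:ℝ) < ‖x‖ := norm_pos_iff.mpr hx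
  have hy0 : (0:ℝ) < ‖y‖ := norm_pos_iff.mpr hy
  have h1 : ‖x‖⁻¹ • x - ‖y‖⁻¹ • y = ‖y‖⁻¹ • (x - y) + (‖x‖⁻¹ - ‖y‖⁻¹) • x := by
    rw [sub_smul, smul_sub]; abel
  rw [h1]
  have h2 : ‖(‖x‖⁻¹ - ‖y‖⁻¹) • x‖ = (‖y‖ - ‖x‖) / ‖y‖ := by
    rw [norm_smul, Real.norm_eq_abs, abs_of_nonneg (by
      have := inv_anti₀ hx0 hxy
      linarith)]
    field_simp
  have h3 : ‖y‖ - ‖x‖ ≤ ‖x - y‖ := by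
    have := abs_norm_sub_norm_le x y
    rw [abs_le] at this; linarith [this.1]
  calc ‖‖y‖⁻¹ • (x - y) + (‖x‖⁻¹ - ‖y‖⁻¹) • x‖
      ≤ ‖‖y‖⁻¹ • (x - y)‖ + ‖(‖x‖⁻¹ - ‖y‖⁻¹) • x‖ := norm_add_le _ _
    _ = ‖y‖⁻¹ * ‖x - y‖ + (‖y‖ - ‖x‖) / ‖y‖ := by
        rw [norm_smul, Real.norm_eq_abs, abs_of_pos (by positivity), h2]
    _ ≤ ‖y‖⁻¹ * ‖x - y‖ + ‖x - y‖ / ‖y‖ := by gcongr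
    _ = (‖y‖⁻¹ + ‖y‖⁻¹) * ‖x - y‖ := by field_simp
    _ ≤ (‖x‖⁻¹ + ‖y‖⁻¹) * ‖x - y‖ := by
        gcongr

lemma normed_sub_le' {H : Type*} [NormedAddCommGroup H] [InnerProductSpace ℝ H]
    (x y : H) (hx : x ≠ 0) (hy : y ≠ 0) :
    ‖‖x‖⁻¹ • x - ‖y‖⁻¹ • y‖ ≤ (‖x‖⁻¹ + ‖y‖⁻¹) * ‖x - y‖ := by
  rcases le_total ‖x‖ ‖y‖ with h | h
  · exact normed_sub_le x y hx hy h
  · have := normed_sub_le y x hy hx h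
    rw [norm_sub_rev, norm_sub_rev x y]
    linarith

/-- For `b ≠ a` and `c ≠ a`, the rank-one operators built from the unit vectors
`D(a,b)` and `D(a,c)` satisfy
`‖T_{D(a,b)} − T_{D(a,c)}‖ ≤ 2 (1/‖a − b‖ + 1/‖a − c‖) ‖b − c‖` in operator norm. -/
theorem rankOne_unitDir_sub_le
    {H : Type*} [NormedAddCommGroup H] [InnerProductSpace ℝ H] [CompleteSpace H]
    (a b c : H) (hb : b ≠ a) (hc : c ≠ a) :
    ‖rankOne (unitDir a b) - rankOne (unitDir a c)‖ ≤
      2 * (1 / ‖a - b‖ + 1 / ‖a - c‖) * ‖b - c‖ := by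
  have hx : b - a ≠ 0 := sub_ne_zero.mpr hb
  have hy : c - a ≠ 0 := sub_ne_zero.mpr hc
  have hub : unitDir a b = ‖b - a‖⁻¹ • (b - a) := by simp [unitDir, hb]
  have huc : unitDir a c = ‖c - a‖⁻¹ • (c - a) := by simp [unitDir, hc]
  have h1 : ‖unitDir a b‖ ≤ 1 := by
    rw [hub, norm_smul, Real.norm_eq_abs, abs_of_nonneg (by positivity)]
    rw [inv_mul_cancel₀ (norm_ne_zero_iff.mpr hx)]
  have h2 : ‖unitDir a c‖ ≤ 1 := by
    rw [huc, norm_smul, Real.norm_eq_abs, abs_of_nonneg (by positivity)]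
    rw [inv_mul_cancel₀ (norm_ne_zero_iff.mpr hy)]
  have key := rankOne_sub_le (unitDir a b) (unitDir a c) h1 h2
  have h3 : ‖unitDir a b - unitDir a c‖ ≤ (‖b - a‖⁻¹ + ‖c - a‖⁻¹) * ‖b - c‖ := by
    rw [hub, huc]
    have := normed_sub_le' (b - a) (c - a) hx hy
    simpa using this
  have hab : ‖a - b‖ = ‖b - a‖ := norm_sub_rev a b
  have hac : ‖a - c‖ = ‖c - a‖ := norm_sub_rev a c
  rw [hab, hac]
  simp only [one_div]
  nlinarith [norm_nonneg (unitDir a b - unitDir a c)]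
end
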